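/- Let 𝕊 be a K×K {0,1}-matrix each of whose rows contains at least one entry 1, and S_1, …, S_K ∈ ℝ^{d×d}, with Kozyakin 𝕊-lift S^{(1)}, …, S^{(K)} ∈ ℝ^{Kd×Kd}. If a word (i_0, …, i_{n-1}) ∈ {1,…,K}^n with n ≥ 1 is not 𝕊-periodically extendable (i.e. either s_{i_k i_{k+1}} = 0 for some 0 ≤ k ≤ n−2, or s_{i_{n-1} i_0} = 0), then ρ(S^{(i_0)} ⋯ S^{(i_{n-1})}) = 0. -/

import Mathlib

open MeasureTheory Filter Matrix
open scoped Kronecker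

/-- The ℓ²-operator norm of a real square matrix. -/
noncomputable def l2OpNorm {ι : Type*} [Fintype ι] [DecidableEq ι]
    (A : Matrix ι ι ℝ) : ℝ :=
  ‖Matrix.toEuclideanCLM (𝕜 := ℝ) A‖

/-- The spectral radius of a real square matrix: the maximum of the absolute values
of its (complex) eigenvalues. -/
noncomputable def specRad {ι : Type*} [Fintype ι] [DecidableEq ι]
    (A : Matrix ι ι ℝ) : ℝ :=
  (spectralRadius ℂ (A.map (fun x => (x : ℂ)))).toReal

/-- The ordered product `S_{w 0} * S_{w 1} * ⋯ * S_{w (n-1)}`. -/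
noncomputable def wordProd {K : ℕ} {ι : Type*} [Fintype ι] [DecidableEq ι]
    (S : Fin K → Matrix ι ι ℝ) (n : ℕ) (w : ℕ → Fin K) : Matrix ι ι ℝ :=
  (List.ofFn fun k : Fin n => S (w k)).prod

/-- The word `(w 0, …, w (n-1))` is `𝕊`-admissible. -/
def Admissible {K : ℕ} (𝕊 : Matrix (Fin K) (Fin K) ℝ) (n : ℕ) (w : ℕ → Fin K) : Prop :=
  ∀ k, k + 1 < n → 𝕊 (w k) (w (k + 1)) = 1

/-- The word `(w 0, …, w (n-1))` is `𝕊`-periodically extendable. -/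
def PerExt {K : ℕ} (𝕊 : Matrix (Fin K) (Fin K) ℝ) (n : ℕ) (w : ℕ → Fin K) : Prop :=
  Admissible 𝕊 n w ∧ 𝕊 (w (n - 1)) (w 0) = 1

/-- The Kozyakin `𝕊`-lift `S^{(k)} = (δ_kᵀ 𝕊_k) ⊗ S_k`. -/
noncomputable def kozLift {K d : ℕ} (𝕊 : Matrix (Fin K) (Fin K) ℝ)
    (S : Fin K → Matrix (Fin d) (Fin d) ℝ) (k : Fin K) :
    Matrix (Fin K × Fin d) (Fin K × Fin d) ℝ :=
  (Matrix.vecMulVec (Pi.single k 1) (𝕊 k)) ⊗ₖ S k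


lemma vecMulVec_mul_vecMulVec {ι : Type*} [Fintype ι]
    (u v u' v' : ι → ℝ) :
    (vecMulVec u v) * (vecMulVec u' v') = (v ⬝ᵥ u') • vecMulVec u v' := by
  ext i j
  simp [Matrix.mul_apply, vecMulVec_apply, dotProduct, Finset.mul_sum, Finset.sum_mul]
  ring_nf
  exact Finset.sum_congr rfl fun x _ => by ring

lemma wordProd_kron {K d : ℕ} (A : Fin K → Matrix (Fin K) (Fin K) ℝ)
    (B : Fin K → Matrix (Fin d) (Fin d) ℝ) (n : ℕ) (w : ℕ → Fin K) :
    (List.ofFn fun k : Fin n => (A (w k)) ⊗ₖ (B (w k))).prod =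
      (List.ofFn fun k : Fin n => A (w k)).prod ⊗ₖ (List.ofFn fun k : Fin n => B (w k)).prod := by
  induction n with
  | zero => simp [Matrix.one_kronecker_one]
  | succ m ih =>
    rw [List.ofFn_succ', List.ofFn_succ', List.ofFn_succ']
    simp only [List.concat_eq_append, List.prod_append, List.prod_cons, List.prod_nil, mul_one,
      Fin.coe_castSucc, Fin.val_last]
    rw [ih, Matrix.mul_kronecker_mul]

lemma rank1_wordProd {K : ℕ} (𝕊 : Matrix (Fin K) (Fin K) ℝ) (m : ℕ) (w : ℕ → Fin K) :
    (List.ofFn fun k : Fin (m+1) => vecMulVec (Pi.single (w k) (1:ℝ)) (𝕊 (w k))).prod =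
      (∏ k ∈ Finset.range m, 𝕊 (w k) (w (k+1))) •
        vecMulVec (Pi.single (w 0) (1:ℝ)) (𝕊 (w m)) := by
  induction m with
  | zero => simp
  | succ m ih =>
    rw [List.ofFn_succ']
    simp only [List.concat_eq_append, List.prod_append, List.prod_cons, List.prod_nil, mul_one,
      Fin.val_last, Fin.coe_castSucc]
    rw [ih,
      Matrix.smul_mul, _root_.vecMulVec_mul_vecMulVec, dotProduct_single, mul_one,
      Finset.prod_range_succ, smul_smul]



lemma specRad_zero_of_sq {ι : Type*} [Fintype ι] [DecidableEq ι] [Nonempty ι]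
    (M : Matrix ι ι ℝ) (h : M * M = 0) :
    ((spectralRadius ℂ (M.map (fun x => (x : ℂ)))) : ENNReal).toReal = 0 := by
  set Mc : Matrix ι ι ℂ := M.map (fun x => (x : ℂ)) with hMc
  have hMc2 : Mc * Mc = 0 := by
    have : Mc = M.map (algebraMap ℝ ℂ) := rfl
    rw [this, ← Matrix.map_mul, h]
    simp
  have hsub : spectrum ℂ Mc ⊆ {0} := by
    intro z hz
    have h2 : z ^ 2 ∈ spectrum ℂ (Mc ^ 2) := by
      have h := spectrum.subset_polynomial_aeval Mc (Polynomial.X ^ 2 : Polynomial ℂ)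
        (Set.mem_image_of_mem _ hz)
      simpa using h
    rw [pow_two, hMc2] at h2
    rw [spectrum.zero_eq] at h2
    simpa using pow_eq_zero_iff (n := 2) (by norm_num) |>.mp (by simpa using h2)
  have : spectralRadius ℂ Mc = 0 := by
    rw [spectralRadius]
    refine le_antisymm (iSup₂_le fun z hz => ?_) zero_le
    have : z = 0 := hsub hz
    simp [this]
  rw [this]; simp

theorem stmt12 {K d : ℕ} (hK : 2 ≤ K) (hd : 1 ≤ d)
    (S : Fin K → Matrix (Fin d) (Fin d) ℝ)
    (𝕊 : Matrix (Fin K) (Fin K) ℝ) (h01 : ∀ i j, 𝕊 i j = 0 ∨ 𝕊 i j = 1)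
    (hrow : ∀ i, ∃ j, 𝕊 i j = 1)
    (n : ℕ) (hn : 1 ≤ n) (w : ℕ → Fin K)
    (hnotper : ¬ PerExt 𝕊 n w) :
    specRad (wordProd (kozLift 𝕊 S) n w) = 0 := by
  haveI : Nonempty (Fin K × Fin d) := ⟨(⟨0, by omega⟩, ⟨0, by omega⟩)⟩
  rw [PerExt, Admissible] at hnotper
  have hsq : wordProd (kozLift 𝕊 S) n w * wordProd (kozLift 𝕊 S) n w = 0 := by
    rw [wordProd]
    obtain ⟨m, rfl⟩ : ∃ m, n = m + 1 := ⟨n - 1, by omega⟩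
    set N : Matrix (Fin K) (Fin K) ℝ :=
      (List.ofFn fun k : Fin (m+1) => vecMulVec (Pi.single (w k) (1:ℝ)) (𝕊 (w k))).prod with hN
    set P : Matrix (Fin d) (Fin d) ℝ := (List.ofFn fun k : Fin (m+1) => S (w k)).prod with hP
    have hM : (List.ofFn fun k : Fin (m+1) => kozLift 𝕊 S (w k)).prod = N ⊗ₖ P := by
      rw [hN, hP]
      exact wordProd_kron (fun i => vecMulVec (Pi.single i 1) (𝕊 i)) S (m+1) w
    have hNN : N * N = 0 := by
      rw [hN, rank1_wordProd]
      set c : ℝ := ∏ k ∈ Finset.range m, 𝕊 (w k) (w (k+1)) with hc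
      rw [Matrix.smul_mul, Matrix.mul_smul, _root_.vecMulVec_mul_vecMulVec,
        dotProduct_single, mul_one, smul_smul, smul_smul]
      push_neg at hnotper
      rcases Classical.em (∀ k, k + 1 < m + 1 → 𝕊 (w k) (w (k + 1)) = 1) with hadm | hadm
      · have h0 : 𝕊 (w m) (w 0) = 0 := by
          rcases h01 (w m) (w 0) with h | h
          · exact h
          · exact absurd h (by simpa using hnotper hadm)
        simp [h0]
      · push_neg at hadm
        obtain ⟨k, hk, hne⟩ := hadm
        have h0 : 𝕊 (w k) (w (k+1)) = 0 := (h01 _ _).resolve_right hne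
        have hc0 : c = 0 := Finset.prod_eq_zero (Finset.mem_range.mpr (by omega)) h0
        simp [hc0]
    rw [hM, ← Matrix.mul_kronecker_mul, hNN, Matrix.zero_kronecker]
  exact specRad_zero_of_sq _ hsq
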